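/- Let ℏ, m, g, E₀, N > 0, set κ = √(2mE₀)/ℏ, and for each n ≥ 0 define ψₙ : (ℝ³)ⁿ → ℂ by ψₙ(y₁,…,yₙ) = N (−gm)ⁿ / ((2πℏ²)ⁿ √(n!)) ∏_{j=1}^n e^{−κ|y_j|}/|y_j| (with ψ₀ = N). Then for every n ≥ 0 and every (y₁,…,yₙ) ∈ (ℝ³)ⁿ with all y_j ≠ 0, the eigenvalue equation holds: −(ℏ²/2m) Σ_{j=1}^n Δ_{y_j} ψₙ(y₁,…,yₙ) + n E₀ ψₙ(y₁,…,yₙ) + (g√(n+1)/4π) ∫_{S²} lim_{r→0} ∂_r [ r ψ_{n+1}(y₁,…,yₙ, rω) ] d²ω = E_min ψₙ(y₁,…,yₙ), where E_min = g² m √(2mE₀) / (2πℏ³). In other words, the explicitly given dressed state ψ_min is an eigenfunction of the interior–boundary-condition Hamiltonian with eigenvalue E_min, sector by sector away from the boundary. -/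

import Mathlib

open Real Complex Filter MeasureTheory Metric

/-- The Laplacian of a complex-valued function on `ℝ³`, as the sum of the second
partial derivatives in the coordinate directions. -/
noncomputable def laplacianC (f : EuclideanSpace ℝ (Fin 3) → ℂ)
    (y : EuclideanSpace ℝ (Fin 3)) : ℂ :=
  ∑ i : Fin 3,
    fderiv ℝ (fun z => fderiv ℝ f z (EuclideanSpace.single i 1)) y
      (EuclideanSpace.single i 1)

/-- The sectors of the dressed ground state of the van Hove-type IBC model:
`ψₙ(y₁,…,yₙ) = N (−gm)ⁿ/((2πℏ²)ⁿ √n!) ∏ⱼ e^{−κ|yⱼ|}/|yⱼ|`. -/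
noncomputable def dressedState (ℏ m g κ N : ℝ) (n : ℕ)
    (y : Fin n → EuclideanSpace ℝ (Fin 3)) : ℂ :=
  ((N * (-(g * m)) ^ n / ((2 * π * ℏ ^ 2) ^ n * Real.sqrt (Nat.factorial n)) *
      ∏ j, Real.exp (-(κ * ‖y j‖)) / ‖y j‖ : ℝ) : ℂ)

/-! ### Auxiliary radial derivative lemmas -/

noncomputable abbrev E3' := EuclideanSpace ℝ (Fin 3)

noncomputable def uu (κ q : ℝ) : ℝ := Real.exp (-(κ * Real.sqrt q)) / Real.sqrt q
noncomputable def uu' (κ q : ℝ) : ℝ :=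
  -(Real.exp (-(κ * Real.sqrt q)) * (κ * Real.sqrt q + 1)) / (2 * Real.sqrt q ^ 3)
noncomputable def uu'' (κ q : ℝ) : ℝ :=
  Real.exp (-(κ * Real.sqrt q)) * (κ ^ 2 * Real.sqrt q ^ 2 + 3 * κ * Real.sqrt q + 3) /
    (4 * Real.sqrt q ^ 5)

lemma hasDerivAt_uu (κ : ℝ) {q : ℝ} (hq : 0 < q) : HasDerivAt (uu κ) (uu' κ q) q := by
  have hs : 0 < Real.sqrt q := Real.sqrt_pos.2 hq
  have hq2 : Real.sqrt q ^ 2 = q := Real.sq_sqrt hq.le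
  have h1 : HasDerivAt (√·) (1 / (2 * Real.sqrt q)) q := hasDerivAt_sqrt hq.ne'
  have h2 : HasDerivAt (fun q => Real.exp (-(κ * Real.sqrt q)))
      (Real.exp (-(κ * Real.sqrt q)) * (-(κ * (1 / (2 * Real.sqrt q))))) q :=
    ((h1.const_mul κ).neg).exp
  have h3 := h2.div h1 hs.ne'
  refine h3.congr_deriv ?_
  unfold uu'
  generalize Real.sqrt q = s at *
  subst hq2
  field_simp
  ring

lemma hasDerivAt_uu' (κ : ℝ) {q : ℝ} (hq : 0 < q) : HasDerivAt (uu' κ) (uu'' κ q) q := by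
  have hs : 0 < Real.sqrt q := Real.sqrt_pos.2 hq
  have hq2 : Real.sqrt q ^ 2 = q := Real.sq_sqrt hq.le
  have h1 : HasDerivAt (√·) (1 / (2 * Real.sqrt q)) q := hasDerivAt_sqrt hq.ne'
  have h2 : HasDerivAt (fun q => Real.exp (-(κ * Real.sqrt q)))
      (Real.exp (-(κ * Real.sqrt q)) * (-(κ * (1 / (2 * Real.sqrt q))))) q :=
    ((h1.const_mul κ).neg).exp
  have hnum : HasDerivAt (fun q => -(Real.exp (-(κ * Real.sqrt q)) * (κ * Real.sqrt q + 1)))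
      (-(Real.exp (-(κ * Real.sqrt q)) * (-(κ * (1 / (2 * Real.sqrt q)))) * (κ * Real.sqrt q + 1)
        + Real.exp (-(κ * Real.sqrt q)) * (κ * (1 / (2 * Real.sqrt q))))) q := by
    have := h2.mul ((h1.const_mul κ).add_const 1)
    exact this.neg
  have hden : HasDerivAt (fun q => 2 * Real.sqrt q ^ 3)
      (2 * ((3 : ℕ) * Real.sqrt q ^ 2 * (1 / (2 * Real.sqrt q)))) q := (h1.pow 3).const_mul 2
  have h3 := hnum.div hden (by positivity)
  refine h3.congr_deriv ?_
  unfold uu''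
  generalize Real.sqrt q = s at *
  subst hq2
  field_simp
  push_cast
  ring

lemma uu_identity (κ : ℝ) {q : ℝ} (hq : 0 < q) :
    4 * q * uu'' κ q + 6 * uu' κ q = κ ^ 2 * uu κ q := by
  have hs : 0 < Real.sqrt q := Real.sqrt_pos.2 hq
  have hq2 : Real.sqrt q ^ 2 = q := Real.sq_sqrt hq.le
  unfold uu uu' uu''
  generalize Real.sqrt q = s at *
  subst hq2
  field_simp
  ring

/-! ### The squared norm and its derivative -/

noncomputable def QQ (z : E3') : ℝ := ∑ i, z i ^ 2

noncomputable def DQ (z : E3') : E3' →L[ℝ] ℝ := ∑ i, (2 * z i) • EuclideanSpace.proj (𝕜 := ℝ) i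

lemma QQ_eq (z : E3') : QQ z = ‖z‖ ^ 2 := by
  rw [EuclideanSpace.norm_eq, Real.sq_sqrt (by positivity)]
  simp [QQ, sq_abs]

lemma QQ_pos {z : E3'} (hz : z ≠ 0) : 0 < QQ z := by
  rw [QQ_eq]; exact pow_pos (norm_pos_iff.mpr hz) 2

lemma DQ_apply (z : E3') (i : Fin 3) : DQ z (EuclideanSpace.single i 1) = 2 * z i := by
  simp [DQ, ContinuousLinearMap.sum_apply, EuclideanSpace.single_apply]

lemma hasFDerivAt_QQ (z : E3') : HasFDerivAt QQ (DQ z) z := by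
  have : ∀ i : Fin 3, HasFDerivAt (fun z : E3' => z i ^ 2)
      ((2 * z i) • EuclideanSpace.proj (𝕜 := ℝ) i) z := by
    intro i
    have h := (EuclideanSpace.proj (𝕜 := ℝ) i).hasFDerivAt (x := z)
    have h2 := h.mul h
    have : (fun z : E3' => z i ^ 2) = fun z : E3' => z i * z i := by ext z; ring
    rw [this]
    refine h2.congr_fderiv ?_
    ext v
    simp [two_mul, add_smul]
  exact HasFDerivAt.fun_sum fun i _ => this i

/-! ### The Laplacian of a radial exponential -/

lemma laplacianC_radial (κ a : ℝ) (y : E3') (hy : y ≠ 0) :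
    laplacianC (fun z => ((a * (Real.exp (-(κ * ‖z‖)) / ‖z‖) : ℝ) : ℂ)) y
      = ((κ ^ 2 * (a * (Real.exp (-(κ * ‖y‖)) / ‖y‖)) : ℝ) : ℂ) := by
  have hqy := QQ_pos hy
  have hfun : (fun z : E3' => ((a * (Real.exp (-(κ * ‖z‖)) / ‖z‖) : ℝ) : ℂ))
      = fun z => ((a * uu κ (QQ z) : ℝ) : ℂ) := by
    funext z
    rw [QQ_eq]
    simp [uu, Real.sqrt_sq (norm_nonneg z)]
  have hD1 : ∀ z : E3', z ≠ 0 → HasFDerivAt (fun z => ((a * uu κ (QQ z) : ℝ) : ℂ))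
      (Complex.ofRealCLM.comp ((a * uu' κ (QQ z)) • DQ z)) z := by
    intro z hz
    have h3 : HasFDerivAt (fun z => a * uu κ (QQ z)) ((a * uu' κ (QQ z)) • DQ z) z :=
      ((hasDerivAt_uu κ (QQ_pos hz)).const_mul a).comp_hasFDerivAt z (hasFDerivAt_QQ z)
    exact Complex.ofRealCLM.hasFDerivAt.comp z h3
  have key : ∀ i : Fin 3,
      fderiv ℝ (fun z => fderiv ℝ (fun z => ((a * uu κ (QQ z) : ℝ) : ℂ)) z
          (EuclideanSpace.single i 1)) y (EuclideanSpace.single i 1)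
        = ((a * uu' κ (QQ y) * 2 + 2 * y i * (a * uu'' κ (QQ y) * (2 * y i)) : ℝ) : ℂ) := by
    intro i
    have hEq : (fun z => fderiv ℝ (fun z => ((a * uu κ (QQ z) : ℝ) : ℂ)) z
          (EuclideanSpace.single i 1))
        =ᶠ[nhds y] fun z => ((a * uu' κ (QQ z) * (2 * z i) : ℝ) : ℂ) := by
      filter_upwards [IsOpen.mem_nhds isOpen_compl_singleton hy] with z hz
      rw [(hD1 z hz).fderiv]
      simp [DQ_apply, mul_assoc]
    rw [hEq.fderiv_eq]
    have hφ : HasFDerivAt (fun z : E3' => a * uu' κ (QQ z)) ((a * uu'' κ (QQ y)) • DQ y) y :=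
      ((hasDerivAt_uu' κ hqy).const_mul a).comp_hasFDerivAt y (hasFDerivAt_QQ y)
    have hψ : HasFDerivAt (fun z : E3' => 2 * z i)
        ((2 : ℝ) • EuclideanSpace.proj (𝕜 := ℝ) i) y :=
      (EuclideanSpace.proj (𝕜 := ℝ) i).hasFDerivAt.const_mul 2
    have hprod := hφ.mul hψ
    have h5 : HasFDerivAt (fun z : E3' => ((a * uu' κ (QQ z) * (2 * z i) : ℝ) : ℂ))
        (Complex.ofRealCLM.comp ((a * uu' κ (QQ y)) • (2 : ℝ) • EuclideanSpace.proj (𝕜 := ℝ) i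
          + (2 * y i) • (a * uu'' κ (QQ y)) • DQ y)) y :=
      Complex.ofRealCLM.hasFDerivAt.comp y hprod
    rw [h5.fderiv]
    simp [DQ_apply, EuclideanSpace.single_apply, mul_assoc]
  rw [hfun]
  unfold laplacianC
  simp_rw [key]
  rw [← Complex.ofReal_sum]
  norm_cast
  have hsum : ∑ i : Fin 3, (a * uu' κ (QQ y) * 2 + 2 * y i * (a * uu'' κ (QQ y) * (2 * y i)))
      = a * (4 * QQ y * uu'' κ (QQ y) + 6 * uu' κ (QQ y)) := by
    rw [Finset.sum_add_distrib, Finset.sum_const]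
    have : ∑ i : Fin 3, 2 * y i * (a * uu'' κ (QQ y) * (2 * y i))
        = 4 * a * uu'' κ (QQ y) * QQ y := by
      rw [QQ, Finset.mul_sum]
      congr 1; funext i; ring
    rw [this]
    simp
    ring
  rw [hsum, uu_identity κ hqy]
  have : Real.exp (-(κ * ‖y‖)) / ‖y‖ = uu κ (QQ y) := by
    rw [QQ_eq]
    simp [uu, Real.sqrt_sq (norm_nonneg y)]
  rw [this]
  ring

/-! ### Surface area of the unit sphere -/

lemma sphere_univ_toReal :
    (((volume : Measure (EuclideanSpace ℝ (Fin 3))).toSphere) Set.univ).toReal = 4 * π := by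
  rw [Measure.toSphere_apply_univ, EuclideanSpace.volume_ball]
  have h1 : Real.Gamma ((Fintype.card (Fin 3) : ℝ) / 2 + 1) = 3 / 4 * Real.sqrt π := by
    have : ((Fintype.card (Fin 3) : ℝ) / 2 + 1) = (1/2 + 1) + 1 := by
      simp [Fintype.card_fin]; norm_num
    rw [this, Real.Gamma_add_one (by norm_num), Real.Gamma_add_one (by norm_num),
      Real.Gamma_one_half_eq]
    ring
  rw [finrank_euclideanSpace, h1]
  simp [Fintype.card_fin]
  have hπ : 0 < Real.sqrt π := Real.sqrt_pos.2 Real.pi_pos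
  rw [ENNReal.toReal_ofReal (by positivity)]
  rw [pow_succ, pow_two, Real.mul_self_sqrt Real.pi_pos.le]
  field_simp

/-! ### The main theorem -/

theorem dressedState_eigenfunction
    (ℏ m g E₀ N : ℝ) (hℏ : 0 < ℏ) (hm : 0 < m) (hg : 0 < g) (hE₀ : 0 < E₀) (hN : 0 < N)
    (κ : ℝ) (hκdef : κ = Real.sqrt (2 * m * E₀) / ℏ) :
    ∀ (n : ℕ) (y : Fin n → EuclideanSpace ℝ (Fin 3)), (∀ j, y j ≠ 0) →
      -((ℏ : ℂ) ^ 2 / (2 * (m : ℂ))) *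
          (∑ j : Fin n,
            laplacianC (fun z => dressedState ℏ m g κ N n (Function.update y j z)) (y j))
        + ((n : ℝ) * E₀ : ℝ) * dressedState ℏ m g κ N n y
        + ((g * Real.sqrt ((n : ℝ) + 1) / (4 * π)) : ℝ) *
            ∫ ω : sphere (0 : EuclideanSpace ℝ (Fin 3)) 1,
              limUnder (nhdsWithin 0 (Set.Ioi 0))
                (fun r : ℝ =>
                  deriv (fun s : ℝ =>
                    (s : ℂ) * dressedState ℏ m g κ N (n + 1)
                      (Fin.snoc y (s • (ω : EuclideanSpace ℝ (Fin 3))))) r)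
              ∂((volume : Measure (EuclideanSpace ℝ (Fin 3))).toSphere)
      = ((g ^ 2 * m * Real.sqrt (2 * m * E₀) / (2 * π * ℏ ^ 3)) : ℝ) *
          dressedState ℏ m g κ N n y := by
  intro n y hy
  obtain ⟨Cn, hCn⟩ : ∃ c : ℝ,
      c = N * (-(g * m)) ^ n / ((2 * π * ℏ ^ 2) ^ n * Real.sqrt (Nat.factorial n)) := ⟨_, rfl⟩
  obtain ⟨Cn1, hCn1⟩ : ∃ c : ℝ, c = N * (-(g * m)) ^ (n + 1) /
      ((2 * π * ℏ ^ 2) ^ (n + 1) * Real.sqrt (Nat.factorial (n + 1))) := ⟨_, rfl⟩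
  obtain ⟨P, hP⟩ : ∃ p : ℝ, p = ∏ j, Real.exp (-(κ * ‖y j‖)) / ‖y j‖ := ⟨_, rfl⟩
  -- Laplacian of each update function
  have hlap : ∀ j : Fin n,
      laplacianC (fun z => dressedState ℏ m g κ N n (Function.update y j z)) (y j)
        = ((κ ^ 2 * (Cn * P) : ℝ) : ℂ) := by
    intro j
    have ha : (fun z => dressedState ℏ m g κ N n (Function.update y j z))
        = fun z => (((Cn * ∏ k ∈ Finset.univ.erase j, Real.exp (-(κ * ‖y k‖)) / ‖y k‖)
            * (Real.exp (-(κ * ‖z‖)) / ‖z‖) : ℝ) : ℂ) := by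
      funext z
      unfold dressedState
      have hupd : (fun k => Real.exp (-(κ * ‖Function.update y j z k‖))
            / ‖Function.update y j z k‖)
          = Function.update (fun k => Real.exp (-(κ * ‖y k‖)) / ‖y k‖) j
            (Real.exp (-(κ * ‖z‖)) / ‖z‖) := by
        funext k
        rcases eq_or_ne k j with rfl | hk
        · simp
        · simp [Function.update_of_ne hk]
      have hr : N * (-(g * m)) ^ n / ((2 * π * ℏ ^ 2) ^ n * Real.sqrt (Nat.factorial n)) *
          ∏ k, Real.exp (-(κ * ‖Function.update y j z k‖)) / ‖Function.update y j z k‖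
          = (Cn * ∏ k ∈ Finset.univ.erase j, Real.exp (-(κ * ‖y k‖)) / ‖y k‖)
            * (Real.exp (-(κ * ‖z‖)) / ‖z‖) := by
        rw [hCn, hupd, Finset.prod_update_of_mem (Finset.mem_univ j), ← Finset.erase_eq]
        ring
      exact_mod_cast congrArg (fun t : ℝ => (t : ℂ)) hr
    rw [ha, laplacianC_radial κ _ (y j) (hy j)]
    have hpe : (∏ k ∈ Finset.univ.erase j, Real.exp (-(κ * ‖y k‖)) / ‖y k‖)
        * (Real.exp (-(κ * ‖y j‖)) / ‖y j‖) = P := by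
      rw [hP]
      exact Finset.prod_erase_mul _ _ (Finset.mem_univ j)
    have : κ ^ 2 * ((Cn * ∏ k ∈ Finset.univ.erase j, Real.exp (-(κ * ‖y k‖)) / ‖y k‖)
        * (Real.exp (-(κ * ‖y j‖)) / ‖y j‖)) = κ ^ 2 * (Cn * P) := by
      linear_combination (κ ^ 2 * Cn) * hpe
    exact_mod_cast congrArg (fun t : ℝ => (t : ℂ)) this
  have hsum : (∑ j : Fin n,
      laplacianC (fun z => dressedState ℏ m g κ N n (Function.update y j z)) (y j))
      = (((n : ℝ) * (κ ^ 2 * (Cn * P)) : ℝ) : ℂ) := by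
    rw [Finset.sum_congr rfl fun j _ => hlap j, Finset.sum_const, Finset.card_univ,
      Fintype.card_fin]
    push_cast
    ring
  -- the boundary integrand is constant
  have hlim : ∀ ω : sphere (0 : EuclideanSpace ℝ (Fin 3)) 1,
      limUnder (nhdsWithin 0 (Set.Ioi 0))
        (fun r : ℝ => deriv (fun s : ℝ => (s : ℂ) * dressedState ℏ m g κ N (n + 1)
          (Fin.snoc y (s • (ω : EuclideanSpace ℝ (Fin 3))))) r)
        = ((-(κ * (Cn1 * P)) : ℝ) : ℂ) := by
    intro ω
    have hω : ‖(ω : EuclideanSpace ℝ (Fin 3))‖ = 1 := by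
      simpa using mem_sphere_zero_iff_norm.mp ω.2
    have hsnoc : ∀ s : ℝ, 0 < s →
        dressedState ℏ m g κ N (n + 1) (Fin.snoc y (s • (ω : EuclideanSpace ℝ (Fin 3))))
          = ((Cn1 * P * (Real.exp (-(κ * s)) / s) : ℝ) : ℂ) := by
      intro s hs
      unfold dressedState
      have hr : N * (-(g * m)) ^ (n + 1) /
          ((2 * π * ℏ ^ 2) ^ (n + 1) * Real.sqrt (Nat.factorial (n + 1))) *
          ∏ j : Fin (n + 1),
            Real.exp (-(κ * ‖(Fin.snoc y (s • (ω : EuclideanSpace ℝ (Fin 3)))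
                : Fin (n + 1) → EuclideanSpace ℝ (Fin 3)) j‖))
            / ‖(Fin.snoc y (s • (ω : EuclideanSpace ℝ (Fin 3)))
                : Fin (n + 1) → EuclideanSpace ℝ (Fin 3)) j‖
          = Cn1 * P * (Real.exp (-(κ * s)) / s) := by
        rw [Fin.prod_univ_castSucc]
        simp only [Fin.snoc_castSucc, Fin.snoc_last]
        rw [norm_smul, hω, mul_one, Real.norm_eq_abs, abs_of_pos hs, hCn1, hP]
        ring
      exact_mod_cast congrArg (fun t : ℝ => (t : ℂ)) hr
    have hderiv : ∀ r : ℝ, 0 < r →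
        deriv (fun s : ℝ => (s : ℂ) * dressedState ℏ m g κ N (n + 1)
          (Fin.snoc y (s • (ω : EuclideanSpace ℝ (Fin 3))))) r
          = ((Cn1 * P * (Real.exp (-(κ * r)) * -κ) : ℝ) : ℂ) := by
      intro r hr
      have hEq : (fun s : ℝ => (s : ℂ) * dressedState ℏ m g κ N (n + 1)
            (Fin.snoc y (s • (ω : EuclideanSpace ℝ (Fin 3)))))
          =ᶠ[nhds r] fun s : ℝ => ((Cn1 * P * Real.exp (-(κ * s)) : ℝ) : ℂ) := by
        filter_upwards [IsOpen.mem_nhds isOpen_Ioi hr] with s hs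
        rw [hsnoc s hs]
        have hs0 : (s : ℂ) ≠ 0 := by exact_mod_cast (ne_of_gt hs)
        push_cast
        field_simp
      rw [hEq.deriv_eq]
      have hin : HasDerivAt (fun s : ℝ => -(κ * s)) (-κ) r := by
        simpa using ((hasDerivAt_id r).const_mul κ).fun_neg
      have hre : HasDerivAt (fun s : ℝ => Cn1 * P * Real.exp (-(κ * s)))
          (Cn1 * P * (Real.exp (-(κ * r)) * -κ)) r := by
        have h := hin.exp.const_mul (Cn1 * P)
        convert h using 1
      exact hre.ofReal_comp.deriv
    apply Filter.Tendsto.limUnder_eq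
    have htend : Filter.Tendsto (fun r : ℝ => ((Cn1 * P * (Real.exp (-(κ * r)) * -κ) : ℝ) : ℂ))
        (nhdsWithin 0 (Set.Ioi 0)) (nhds ((-(κ * (Cn1 * P)) : ℝ) : ℂ)) := by
      have hc : Continuous fun r : ℝ => ((Cn1 * P * (Real.exp (-(κ * r)) * -κ) : ℝ) : ℂ) := by
        refine Complex.continuous_ofReal.comp ?_
        exact (continuous_const.mul ((Real.continuous_exp.comp
          ((continuous_const.mul continuous_id).neg)).mul continuous_const))
      have h0 : Filter.Tendsto (fun r : ℝ => ((Cn1 * P * (Real.exp (-(κ * r)) * -κ) : ℝ) : ℂ))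
          (nhdsWithin 0 (Set.Ioi 0))
          (nhds ((Cn1 * P * (Real.exp (-(κ * (0 : ℝ))) * -κ) : ℝ) : ℂ)) :=
        (hc.tendsto 0).mono_left nhdsWithin_le_nhds
      have hval : ((Cn1 * P * (Real.exp (-(κ * (0:ℝ))) * -κ) : ℝ) : ℂ)
          = ((-(κ * (Cn1 * P)) : ℝ) : ℂ) := by
        norm_num
        ring_nf
      rw [hval] at h0
      exact h0
    refine htend.congr' ?_
    filter_upwards [self_mem_nhdsWithin] with r hr
    exact (hderiv r hr).symm
  have hint : (∫ ω : sphere (0 : EuclideanSpace ℝ (Fin 3)) 1,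
      limUnder (nhdsWithin 0 (Set.Ioi 0))
        (fun r : ℝ => deriv (fun s : ℝ => (s : ℂ) * dressedState ℏ m g κ N (n + 1)
          (Fin.snoc y (s • (ω : EuclideanSpace ℝ (Fin 3))))) r)
      ∂((volume : Measure (EuclideanSpace ℝ (Fin 3))).toSphere))
      = (((4 * π) * -(κ * (Cn1 * P)) : ℝ) : ℂ) := by
    simp_rw [hlim]
    rw [integral_const, measureReal_def, sphere_univ_toReal, Complex.real_smul]
    push_cast
    ring
  rw [hsum, hint]
  have hψ : dressedState ℏ m g κ N n y = ((Cn * P : ℝ) : ℂ) := by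
    unfold dressedState
    rw [hCn, hP]
  rw [hψ]
  -- reduce to a real identity
  have hreal : -(ℏ ^ 2 / (2 * m)) * ((n : ℝ) * (κ ^ 2 * (Cn * P)))
      + ((n : ℝ) * E₀) * (Cn * P)
      + (g * Real.sqrt ((n : ℝ) + 1) / (4 * π)) * ((4 * π) * -(κ * (Cn1 * P)))
      = (g ^ 2 * m * Real.sqrt (2 * m * E₀) / (2 * π * ℏ ^ 3)) * (Cn * P) := by
    subst hκdef
    have hfact : Real.sqrt (Nat.factorial (n + 1))
        = Real.sqrt ((n : ℝ) + 1) * Real.sqrt (Nat.factorial n) := by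
      rw [Nat.factorial_succ]
      push_cast
      rw [Real.sqrt_mul (by positivity)]
    rw [hCn1, hCn, hfact, pow_succ, pow_succ]
    obtain ⟨S, hSdef⟩ : ∃ s : ℝ, s = Real.sqrt (2 * m * E₀) := ⟨_, rfl⟩
    rw [← hSdef]
    have hS2 : S ^ 2 = 2 * m * E₀ := by rw [hSdef]; exact Real.sq_sqrt (by positivity)
    have hSpos : 0 < S := by rw [hSdef]; positivity
    have hE : E₀ = S ^ 2 / (2 * m) := by rw [hS2]; field_simp
    rw [hE]
    have hs1 : Real.sqrt ((n : ℝ) + 1) ≠ 0 := by positivity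
    have hs2 : Real.sqrt (Nat.factorial n) ≠ 0 := by
      have : (0 : ℝ) < (Nat.factorial n : ℝ) := by exact_mod_cast Nat.factorial_pos n
      positivity
    have hB : ((2 * π * ℏ ^ 2) ^ n : ℝ) ≠ 0 := by
      have := Real.pi_pos
      positivity
    have hπ : (π : ℝ) ≠ 0 := Real.pi_ne_zero
    field_simp
    ring
  exact_mod_cast hreal
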